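/- Let q be a prime power, m, n, k, r positive integers with r ≤ n and k + 1 < n, and let (1, α, …, α^{m−1}) be a basis of F_{q^m} over F_q. Let H be an (n−k−1)×n matrix over F_{q^m}. Assume that every nonzero vector v ∈ F_{q^m}^n with v·Hᵀ = 0 has rank weight at least r. Then for every r×(n−r) matrix C* over F_q, the following are equivalent: (i) the r×(n−k−1) matrix (I_r | C*)·Hᵀ over F_{q^m} has rank strictly less than r; (ii) there exists an m×(r−1) matrix S* over F_q such that (1, α, …, α^{m−1}) · (e₁ | S*) · (I_r | C*) · Hᵀ = 0, where e₁ ∈ F_q^m is the column vector (1, 0, …, 0)ᵀ and (e₁ | S*) is the m×r matrix with first column e₁ and remaining columns S*. -/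

import Mathlib

/-- The `r × n` matrix `(I_r | C)` obtained by concatenating the identity
matrix `I_r` with an `r × (n−r)` matrix `C`. -/
def augId (r n : ℕ) {R : Type*} [Zero R] [One R]
    (C : Matrix (Fin r) (Fin (n - r)) R) : Matrix (Fin r) (Fin n) R :=
  Matrix.of fun i j =>
    if h : (j : ℕ) < r then (if (i : ℕ) = (j : ℕ) then 1 else 0)
    else C i ⟨(j : ℕ) - r, by have := j.isLt; omega⟩

/-- The `m × r` matrix `(e₁ | S)` whose first column is `e₁ = (1,0,…,0)ᵀ` and
whose remaining columns are those of the `m × (r−1)` matrix `S`. -/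
def augE1 (m r : ℕ) {R : Type*} [Zero R] [One R]
    (S : Matrix (Fin m) (Fin (r - 1)) R) : Matrix (Fin m) (Fin r) R :=
  Matrix.of fun i j =>
    if h : (j : ℕ) = 0 then (if (i : ℕ) = 0 then 1 else 0)
    else S i ⟨(j : ℕ) - 1, by have := j.isLt; omega⟩


open Matrix Module

/-- Over a field, an `r × c` matrix has rank `< r` iff it has a nonzero left-kernel vector. -/
lemma rank_lt_iff_exists_left_kernel {K : Type*} [Field K] {r c : ℕ}
    (M : Matrix (Fin r) (Fin c) K) :
    M.rank < r ↔ ∃ w : Fin r → K, w ≠ 0 ∧ Matrix.vecMul w M = 0 := by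
  have hrn : M.rank = Mᵀ.rank := (Matrix.rank_transpose M).symm
  have hker : ∀ w : Fin r → K, w ∈ LinearMap.ker Mᵀ.mulVecLin ↔ Matrix.vecMul w M = 0 := by
    intro w
    simp [Matrix.mulVecLin, Matrix.mulVec_transpose]
  have hrank := LinearMap.finrank_range_add_finrank_ker Mᵀ.mulVecLin
  rw [finrank_pi, Fintype.card_fin] at hrank
  have hMt : Mᵀ.rank = finrank K (LinearMap.range Mᵀ.mulVecLin) := rfl
  constructor
  · intro h
    have hkpos : 0 < finrank K (LinearMap.ker Mᵀ.mulVecLin) := by omega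
    rw [Module.finrank_pos_iff] at hkpos
    obtain ⟨⟨w, hw⟩, hw0⟩ := exists_ne (0 : LinearMap.ker Mᵀ.mulVecLin)
    refine ⟨w, ?_, (hker w).mp hw⟩
    simpa [Submodule.mk_eq_zero] using hw0
  · rintro ⟨w, hw0, hw⟩
    have hwk : w ∈ LinearMap.ker Mᵀ.mulVecLin := (hker w).mpr hw
    have : 0 < finrank K (LinearMap.ker Mᵀ.mulVecLin) :=
      Module.finrank_pos_iff.mpr ⟨⟨⟨w, hwk⟩, 0, by simpa [Submodule.mk_eq_zero] using hw0⟩⟩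
    omega

/-- The rank of the coordinate matrix of a vector `v : Fin n → L` with respect to a basis
equals the dimension of the span of the entries of `v`. -/
lemma rank_coord_eq {Fq L : Type*} [Field Fq] [AddCommGroup L] [Module Fq L] {m n : ℕ}
    (b : Basis (Fin m) Fq L) (v : Fin n → L) :
    (Matrix.of (fun (i : Fin m) (j : Fin n) => b.repr (v j) i) :
        Matrix (Fin m) (Fin n) Fq).rank
      = finrank Fq (Submodule.span Fq (Set.range v)) := by
  rw [Matrix.rank_eq_finrank_span_cols]
  have h1 : Set.range (Matrix.of (fun (i : Fin m) (j : Fin n) => b.repr (v j) i) :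
        Matrix (Fin m) (Fin n) Fq).col
      = ⇑b.equivFun '' (Set.range v) := by
    rw [← Set.range_comp]
    rfl
  rw [h1, ← LinearEquiv.coe_coe, ← Submodule.map_span]
  exact LinearEquiv.finrank_map_eq b.equivFun _

open Matrix Module

/-- Computation of `(1,α,…,α^{m-1}) ᵥ* (e₁ | S)` entrywise. -/
lemma augE1_vecMul {Fq L : Type*} [Field Fq] [Field L] [Algebra Fq L] {m r : ℕ}
    (hm : 0 < m) (α : L) (S : Matrix (Fin m) (Fin (r - 1)) Fq) (j : Fin r) :
    Matrix.vecMul (fun i : Fin m => α ^ (i : ℕ)) ((augE1 m r S).map (algebraMap Fq L)) j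
      = if hj : (j : ℕ) = 0 then 1
        else ∑ i : Fin m, α ^ (i : ℕ) *
          algebraMap Fq L (S i ⟨(j : ℕ) - 1, by have := j.isLt; omega⟩) := by
  set φ := algebraMap Fq L
  by_cases hj : (j : ℕ) = 0
  · simp only [Matrix.vecMul, dotProduct, Matrix.map_apply, augE1, Matrix.of_apply,
      hj, dif_pos]
    have : ∀ i : Fin m, α ^ (i : ℕ) * φ (if (i : ℕ) = 0 then 1 else 0)
        = if i = (⟨0, hm⟩ : Fin m) then α ^ (i : ℕ) else 0 := by
      intro i
      by_cases hi : (i : ℕ) = 0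
      · rw [if_pos hi, if_pos (Fin.ext hi), φ.map_one, mul_one]
      · rw [if_neg hi, if_neg (fun h => hi (by rw [h])), φ.map_zero, mul_zero]
    rw [Finset.sum_congr rfl (fun i _ => this i), Finset.sum_ite_eq' Finset.univ]
    simp
  · simp only [Matrix.vecMul, dotProduct, Matrix.map_apply, augE1, Matrix.of_apply]
    rw [dif_neg hj]
    exact Finset.sum_congr rfl (fun i _ => by rw [dif_neg hj])

/-- Any vector with first entry `1` arises as `(1,α,…,α^{m-1}) ᵥ* (e₁ | S)` for some `S`. -/
lemma exists_augE1_vecMul_eq {Fq L : Type*} [Field Fq] [Field L] [Algebra Fq L] {m r : ℕ}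
    (hm : 0 < m) (hr : 0 < r) (α : L) (b : Basis (Fin m) Fq L)
    (hb : ∀ i : Fin m, b i = α ^ (i : ℕ)) (w : Fin r → L) (hw : w ⟨0, hr⟩ = 1) :
    ∃ S : Matrix (Fin m) (Fin (r - 1)) Fq,
      Matrix.vecMul (fun i : Fin m => α ^ (i : ℕ)) ((augE1 m r S).map (algebraMap Fq L)) = w := by
  refine ⟨Matrix.of (fun i j => b.repr (w ⟨(j : ℕ) + 1, by have := j.isLt; omega⟩) i), ?_⟩
  funext j
  rw [augE1_vecMul hm α _ j]
  by_cases hj : (j : ℕ) = 0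
  · rw [dif_pos hj]
    have : j = ⟨0, hr⟩ := Fin.ext hj
    rw [this, hw]
  · rw [dif_neg hj]
    have hjj : (⟨((j : ℕ) - 1 : ℕ) + 1, by have := j.isLt; omega⟩ : Fin r) = j :=
      Fin.ext (by simp; omega)
    have key : ∀ i : Fin m,
        α ^ (i : ℕ) * algebraMap Fq L
            ((Matrix.of (fun i j => b.repr (w ⟨(j : ℕ) + 1, by have := j.isLt; omega⟩) i) :
              Matrix (Fin m) (Fin (r - 1)) Fq) i ⟨(j : ℕ) - 1, by have := j.isLt; omega⟩)
          = b.repr (w j) i • b i := by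
      intro i
      have h1 : (Matrix.of (fun i j => b.repr (w ⟨(j : ℕ) + 1, by have := j.isLt; omega⟩) i) :
              Matrix (Fin m) (Fin (r - 1)) Fq) i ⟨(j : ℕ) - 1, by have := j.isLt; omega⟩
          = b.repr (w j) i := congrArg (fun t => b.repr (w t) i) hjj
      rw [h1, hb i, Algebra.smul_def, mul_comm]
    rw [Finset.sum_congr rfl (fun i _ => key i), Basis.sum_repr]
/-- If every nonzero `v ∈ F_{q^m}^n` with `v · Hᵀ = 0` has rank
weight at least `r`, then for every `r × (n−r)` matrix `C*` over `F_q`: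
`(I_r | C*) · Hᵀ` has rank `< r` iff there is an `m × (r−1)` matrix `S*` over
`F_q` with `(1, α, …, α^{m−1}) · (e₁ | S*) · (I_r | C*) · Hᵀ = 0`. -/
theorem stmt_2 (q m n k r : ℕ) (hq : IsPrimePow q)
    (hm : 0 < m) (hn : 0 < n) (hk : 0 < k) (hr : 0 < r)
    (hrn : r ≤ n) (hkn : k + 1 < n)
    (Fq L : Type) [Field Fq] [Fintype Fq] [Field L] [Fintype L] [Algebra Fq L]
    (hcardFq : Fintype.card Fq = q) (hcardL : Fintype.card L = q ^ m)
    (α : L) (b : Basis (Fin m) Fq L) (hb : ∀ i : Fin m, b i = α ^ (i : ℕ))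
    (H : Matrix (Fin (n - k - 1)) (Fin n) L)
    (hmin : ∀ v : Fin n → L, v ≠ 0 → Matrix.vecMul v H.transpose = 0 →
      r ≤ (Matrix.of (fun (i : Fin m) (j : Fin n) => b.repr (v j) i) :
        Matrix (Fin m) (Fin n) Fq).rank)
    (Cstar : Matrix (Fin r) (Fin (n - r)) Fq) :
    ((augId r n Cstar).map (algebraMap Fq L) * H.transpose).rank < r ↔
      ∃ Sstar : Matrix (Fin m) (Fin (r - 1)) Fq,
        Matrix.vecMul (fun i : Fin m => α ^ (i : ℕ))
          ((augE1 m r Sstar).map (algebraMap Fq L) *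
            (augId r n Cstar).map (algebraMap Fq L) * H.transpose) = 0 := by
  classical
  haveI : FiniteDimensional Fq L := Module.Finite.of_basis b
  set φ := algebraMap Fq L with hφ
  set A : Matrix (Fin r) (Fin n) L := (augId r n Cstar).map φ with hA
  set M : Matrix (Fin r) (Fin (n - k - 1)) L := A * H.transpose with hM
  constructor
  · -- forward direction
    intro hrank
    obtain ⟨w, hw0, hwM⟩ := (rank_lt_iff_exists_left_kernel M).mp hrank
    set v : Fin n → L := Matrix.vecMul w A with hv
    have hvdef : ∀ j : Fin n, v j = ∑ i : Fin r, w i * φ (augId r n Cstar i j) := fun j => rfl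
    have hvj : ∀ (j : Fin n) (hj : (j : ℕ) < r), v j = w ⟨(j : ℕ), hj⟩ := by
      intro j hj
      rw [hvdef]
      have : ∀ i : Fin r, w i * φ (augId r n Cstar i j)
          = if i = (⟨(j : ℕ), hj⟩ : Fin r) then w i else 0 := by
        intro i
        simp only [augId, Matrix.of_apply, dif_pos hj]
        by_cases hi : (i : ℕ) = (j : ℕ)
        · rw [if_pos hi, if_pos (Fin.ext hi), φ.map_one, mul_one]
        · rw [if_neg hi, if_neg (fun h => hi (by rw [h])), φ.map_zero, mul_zero]
      rw [Finset.sum_congr rfl (fun i _ => this i), Finset.sum_ite_eq' Finset.univ]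
      simp
    have hvH : Matrix.vecMul v H.transpose = 0 := by
      rw [hv, Matrix.vecMul_vecMul, ← hM, hwM]
    have hvne : v ≠ 0 := by
      obtain ⟨i, hi⟩ := Function.ne_iff.mp hw0
      intro hcon
      apply hi
      have hj : ((⟨(i : ℕ), lt_of_lt_of_le i.isLt hrn⟩ : Fin n) : ℕ) < r := i.isLt
      have := hvj ⟨(i : ℕ), lt_of_lt_of_le i.isLt hrn⟩ hj
      rw [hcon] at this
      simpa using this.symm
    have hge : r ≤ finrank Fq (Submodule.span Fq (Set.range v)) := by
      rw [← rank_coord_eq b v]; exact hmin v hvne hvH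
    have hvmem : ∀ j, v j ∈ Submodule.span Fq (Set.range w) := by
      intro j
      rw [hvdef]
      refine Submodule.sum_mem _ (fun i _ => ?_)
      rw [mul_comm, ← Algebra.smul_def]
      exact Submodule.smul_mem _ _ (Submodule.subset_span ⟨i, rfl⟩)
    have hspan : Submodule.span Fq (Set.range v) ≤ Submodule.span Fq (Set.range w) :=
      Submodule.span_le.mpr (by rintro x ⟨j, rfl⟩; exact hvmem j)
    -- the first entry of w is nonzero
    have hw0ne : w ⟨0, hr⟩ ≠ 0 := by
      intro hz
      set u : Fin (r - 1) → L := fun i => w ⟨(i : ℕ) + 1, by have := i.isLt; omega⟩ with hu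
      have hwmem : ∀ i : Fin r, w i ∈ Submodule.span Fq (Set.range u) := by
        intro i
        by_cases hi : (i : ℕ) = 0
        · have : i = ⟨0, hr⟩ := Fin.ext hi
          rw [this, hz]; exact Submodule.zero_mem _
        · have hlt : (i : ℕ) - 1 < r - 1 := by have := i.isLt; omega
          have : w i = u ⟨(i : ℕ) - 1, hlt⟩ := by
            rw [hu]; congr 1; exact Fin.ext (by simp; omega)
          rw [this]
          exact Submodule.subset_span ⟨_, rfl⟩
      have hle : Submodule.span Fq (Set.range w) ≤ Submodule.span Fq (Set.range u) :=
        Submodule.span_le.mpr (by rintro x ⟨i, rfl⟩; exact hwmem i)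
      have h1 : r ≤ finrank Fq (Submodule.span Fq (Set.range u)) :=
        le_trans hge (le_trans (Submodule.finrank_mono hspan) (Submodule.finrank_mono hle))
      have h2 := finrank_range_le_card (R := Fq) u
      rw [Set.finrank, Fintype.card_fin] at h2
      omega
    -- normalize the first entry to 1
    have hw'M : Matrix.vecMul ((w ⟨0, hr⟩)⁻¹ • w) M = 0 := by
      rw [Matrix.smul_vecMul, hwM, smul_zero]
    have hw'0 : ((w ⟨0, hr⟩)⁻¹ • w) ⟨0, hr⟩ = 1 := inv_mul_cancel₀ hw0ne
    obtain ⟨S, hkey⟩ := exists_augE1_vecMul_eq hm hr α b hb ((w ⟨0, hr⟩)⁻¹ • w) hw'0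
    refine ⟨S, ?_⟩
    rw [Matrix.mul_assoc, ← Matrix.vecMul_vecMul, hkey, ← hM, hw'M]
  · -- backward direction
    rintro ⟨S, hSeq⟩
    set w : Fin r → L := Matrix.vecMul (fun i : Fin m => α ^ (i : ℕ)) ((augE1 m r S).map φ)
      with hw
    have hw0 : w ⟨0, hr⟩ = 1 := by rw [hw, augE1_vecMul hm α S ⟨0, hr⟩, dif_pos rfl]
    have hwne : w ≠ 0 := by
      intro hcon
      rw [hcon] at hw0
      exact one_ne_zero hw0.symm
    have hwM : Matrix.vecMul w M = 0 := by
      rw [hw, Matrix.vecMul_vecMul, ← Matrix.mul_assoc, ← hM] at *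
      exact hSeq
    exact (rank_lt_iff_exists_left_kernel M).mpr ⟨w, hwne, hwM⟩
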